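/- Let α₁ = (0 2)(1 3)(4 9)(5 11)(6 8)(7 10) and α₂ = (0 4)(2 9)(5 6)(7 10)(8 11) be permutations of {0,…,11}. Then α₁ and α₂ commute, each has order 2, α₁ ≠ α₂, and the subgroup they generate has exactly 4 elements and is isomorphic to ℤ/2 × ℤ/2. -/

import Mathlib

open Equiv

/-- α₁ = (0 2)(1 3)(4 9)(5 11)(6 8)(7 10) -/
def ko2Alpha1 : Equiv.Perm (Fin 12) :=
  swap 0 2 * swap 1 3 * swap 4 9 * swap 5 11 * swap 6 8 * swap 7 10

/-- α₂ = (0 4)(2 9)(5 6)(7 10)(8 11) -/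
def ko2Alpha2 : Equiv.Perm (Fin 12) :=
  swap 0 4 * swap 2 9 * swap 5 6 * swap 7 10 * swap 8 11

private lemma hcomm : ko2Alpha1 * ko2Alpha2 = ko2Alpha2 * ko2Alpha1 := by decide

private lemma haa : ko2Alpha1 * ko2Alpha1 = 1 := by decide
private lemma hbb : ko2Alpha2 * ko2Alpha2 = 1 := by decide
private lemma hne : ko2Alpha1 ≠ ko2Alpha2 := by decide
private lemma ha1 : ko2Alpha1 ≠ 1 := by decide
private lemma hb1 : ko2Alpha2 ≠ 1 := by decide

/-- The Klein four subgroup generated by α₁, α₂. -/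
def ko2K : Subgroup (Equiv.Perm (Fin 12)) where
  carrier := {1, ko2Alpha1, ko2Alpha2, ko2Alpha1 * ko2Alpha2}
  one_mem' := Or.inl rfl
  mul_mem' := by
    rintro x y (rfl | rfl | rfl | rfl) (rfl | rfl | rfl | rfl) <;>
      simp only [Set.mem_insert_iff, Set.mem_singleton_iff] <;> decide
  inv_mem' := by
    rintro x (rfl | rfl | rfl | rfl) <;>
      simp only [Set.mem_insert_iff, Set.mem_singleton_iff] <;> decide

private lemma closure_eq :
    Subgroup.closure ({ko2Alpha1, ko2Alpha2} : Set (Equiv.Perm (Fin 12))) = ko2K := by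
  apply le_antisymm
  · rw [Subgroup.closure_le]
    rintro x (rfl | rfl)
    · exact Or.inr (Or.inl rfl)
    · exact Or.inr (Or.inr (Or.inl rfl))
  · rintro x (rfl | rfl | rfl | rfl)
    · exact one_mem _
    · exact Subgroup.subset_closure (Or.inl rfl)
    · exact Subgroup.subset_closure (Or.inr rfl)
    · exact mul_mem (Subgroup.subset_closure (Or.inl rfl))
        (Subgroup.subset_closure (Or.inr rfl))

private lemma card_K : Nat.card ko2K = 4 := by
  have hset : (ko2K : Set (Equiv.Perm (Fin 12)))
      = (↑({1, ko2Alpha1, ko2Alpha2, ko2Alpha1 * ko2Alpha2} :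
          Finset (Equiv.Perm (Fin 12))) : Set (Equiv.Perm (Fin 12))) := by
    simp [ko2K, Finset.coe_insert]; rfl
  have : Nat.card ko2K = Nat.card
      (↑({1, ko2Alpha1, ko2Alpha2, ko2Alpha1 * ko2Alpha2} :
        Finset (Equiv.Perm (Fin 12))) : Set (Equiv.Perm (Fin 12))) := by
    exact Nat.card_congr (Equiv.setCongr hset)
  rw [this, Nat.card_coe_set_eq, Set.ncard_coe_finset]
  decide

private lemma ko2_sq_eq_one (g : ko2K) : g ^ 2 = 1 := by
  have hg := g.2
  simp only [ko2K, Subgroup.mem_mk, Set.mem_insert_iff, Set.mem_singleton_iff] at hg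
  apply Subtype.ext
  push_cast
  rcases hg with h | h | h | h <;> rw [pow_two, h]
  · simp
  · exact haa
  · exact hbb
  · rw [mul_assoc, ← mul_assoc ko2Alpha2, ← hcomm, mul_assoc, hbb, mul_one, haa]

instance : IsKleinFour ko2K where
  card_four := card_K
  exponent_two := by
    have hdvd : Monoid.exponent ko2K ∣ 2 :=
      Monoid.exponent_dvd_of_forall_pow_eq_one ko2_sq_eq_one
    have hne1 : Monoid.exponent ko2K ≠ 1 := by
      intro h
      have h2 := Monoid.pow_exponent_eq_one
        (⟨ko2Alpha1, Or.inr (Or.inl rfl)⟩ : ko2K)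
      rw [h, pow_one] at h2
      exact ha1 (congrArg Subtype.val h2)
    rcases (Nat.prime_two).eq_one_or_self_of_dvd _ hdvd with h | h
    · exact absurd h hne1
    · exact h

theorem stmt16 :
    ko2Alpha1 * ko2Alpha2 = ko2Alpha2 * ko2Alpha1 ∧
    orderOf ko2Alpha1 = 2 ∧ orderOf ko2Alpha2 = 2 ∧ ko2Alpha1 ≠ ko2Alpha2 ∧
    Nat.card (Subgroup.closure ({ko2Alpha1, ko2Alpha2} : Set (Equiv.Perm (Fin 12)))) = 4 ∧
    Nonempty ((Subgroup.closure ({ko2Alpha1, ko2Alpha2} : Set (Equiv.Perm (Fin 12)))) ≃*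
      Multiplicative (ZMod 2 × ZMod 2)) := by
  refine ⟨hcomm, ?_, ?_, hne, ?_, ?_⟩
  · exact orderOf_eq_prime (by rw [pow_two]; exact haa) ha1
  · exact orderOf_eq_prime (by rw [pow_two]; exact hbb) hb1
  · rw [closure_eq]; exact card_K
  · rw [closure_eq]; exact IsKleinFour.nonempty_mulEquiv
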